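/- Let S ∈ ℝ^{n×n} be a symmetric α-sparse matrix (each row and column has at most αn nonzero entries), and let W ∈ ℝ^{n×r} have orthonormal columns with μ-incoherence, i.e., ‖Wᵀeᵢ‖₂ ≤ √(μr/n) for all i. Then for every index i and every integer a ≥ 0, ‖Wᵀ Sᵃ eᵢ‖₂ ≤ √(μr/n) · (αn‖S‖_∞)ᵃ. -/

import Mathlib

open Matrix BigOperators MeasureTheory

noncomputable def specNorm {m n : ℕ} (A : Matrix (Fin m) (Fin n) ℝ) : ℝ :=
  ‖LinearMap.toContinuousLinearMap (Matrix.toEuclideanLin A)‖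

def IsMPInv {m n : ℕ} (A : Matrix (Fin m) (Fin n) ℝ) (B : Matrix (Fin n) (Fin m) ℝ) : Prop :=
  A * B * A = A ∧ B * A * B = B ∧ (A * B)ᵀ = A * B ∧ (B * A)ᵀ = B * A

noncomputable def rowNorm {m n : ℕ} (A : Matrix (Fin m) (Fin n) ℝ) (i : Fin m) : ℝ :=
  Real.sqrt (∑ j, (A i j) ^ 2)

noncomputable def entryMax {m n : ℕ} (A : Matrix (Fin m) (Fin n) ℝ) : ℝ :=
  ⨆ i, ⨆ j, |A i j|

lemma abs_le_entryMax {m n : ℕ} (A : Matrix (Fin m) (Fin n) ℝ) (i : Fin m) (j : Fin n) :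
    |A i j| ≤ entryMax A := by
  calc |A i j| ≤ ⨆ j, |A i j| := le_ciSup (f := fun j => |A i j|) (Set.Finite.bddAbove (Set.finite_range _)) j
    _ ≤ ⨆ i, ⨆ j, |A i j| :=
      le_ciSup (f := fun i => ⨆ j, |A i j|) (Set.Finite.bddAbove (Set.finite_range _)) i

lemma rowNormT_eq {m n : ℕ} (A : Matrix (Fin m) (Fin n) ℝ) (j : Fin n) :
    rowNorm Aᵀ j = ‖(WithLp.equiv 2 (Fin m → ℝ)).symm (fun k => A k j)‖ := by
  rw [EuclideanSpace.norm_eq]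
  simp [rowNorm, Matrix.transpose_apply, Real.norm_eq_abs, sq_abs,
    WithLp.ofLp_toLp]

theorem stmt7 (n r : ℕ) (α μ : ℝ)
    (S : Matrix (Fin n) (Fin n) ℝ) (hsym : Sᵀ = S)
    (hrow : ∀ i, ((Finset.univ.filter (fun j => S i j ≠ 0)).card : ℝ) ≤ α * n)
    (hcol : ∀ j, ((Finset.univ.filter (fun i => S i j ≠ 0)).card : ℝ) ≤ α * n)
    (W : Matrix (Fin n) (Fin r) ℝ) (hW : Wᵀ * W = 1)
    (hinc : ∀ i, rowNorm W i ≤ Real.sqrt (μ * r / n)) :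
    ∀ (i : Fin n) (a : ℕ),
      rowNorm ((Wᵀ * S ^ a)ᵀ) i ≤ Real.sqrt (μ * r / n) * (α * n * entryMax S) ^ a := by
  intro i a
  induction a generalizing i with
  | zero =>
    simpa [pow_zero, Matrix.mul_one, Matrix.transpose_transpose] using hinc i
  | succ a ih =>
    have hα : (0:ℝ) ≤ α * n := le_trans (Nat.cast_nonneg _) (hcol i)
    have hE : (0:ℝ) ≤ entryMax S := (abs_nonneg _).trans (abs_le_entryMax S i i)
    set u : Fin n → EuclideanSpace ℝ (Fin r) :=
      fun j => (WithLp.equiv 2 (Fin r → ℝ)).symm (fun k => (Wᵀ * S ^ a) k j) with hu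
    have hfun : (fun k => (Wᵀ * S ^ (a+1)) k i)
        = ∑ j : Fin n, S j i • (fun k => (Wᵀ * S ^ a) k j) := by
      have hWS : Wᵀ * S ^ (a+1) = (Wᵀ * S ^ a) * S := by
        rw [pow_succ, Matrix.mul_assoc]
      funext k
      rw [hWS]
      simp only [Matrix.mul_apply, Finset.sum_apply, Pi.smul_apply, smul_eq_mul]
      exact Finset.sum_congr rfl fun j _ => mul_comm _ _
    have hsum : ((WithLp.equiv 2 (Fin r → ℝ)).symm (fun k => (Wᵀ * S ^ (a+1)) k i))
        = ∑ j, S j i • u j := by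
      show ((WithLp.linearEquiv 2 ℝ (Fin r → ℝ)).symm (fun k => (Wᵀ * S ^ (a+1)) k i))
        = ∑ j, S j i • u j
      rw [hfun, map_sum]
      exact Finset.sum_congr rfl fun j _ => by rw [_root_.map_smul]; rfl
    rw [rowNormT_eq, hsum]
    have h1 : ‖∑ j, S j i • u j‖ ≤ ∑ j, |S j i| * ‖u j‖ := by
      refine le_trans (norm_sum_le _ _) (le_of_eq ?_)
      simp [norm_smul]
    set T := Finset.univ.filter (fun j => S j i ≠ 0) with hT
    have h2 : ∑ j, |S j i| * ‖u j‖ = ∑ j ∈ T, |S j i| * ‖u j‖ := by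
      rw [hT]
      refine (Finset.sum_filter_of_ne fun j _ hne => ?_).symm
      intro h0
      simp [h0] at hne
    have h3 : ∑ j ∈ T, |S j i| * ‖u j‖
        ≤ ∑ j ∈ T, entryMax S * (Real.sqrt (μ * r / n) * (α * n * entryMax S) ^ a) := by
      refine Finset.sum_le_sum fun j _ => ?_
      have hij := ih j
      rw [rowNormT_eq] at hij
      exact mul_le_mul (abs_le_entryMax S j i) hij (norm_nonneg _) hE
    have h4 : ∑ j ∈ T, entryMax S * (Real.sqrt (μ * r / n) * (α * n * entryMax S) ^ a)
        = (T.card : ℝ) * (entryMax S * (Real.sqrt (μ * r / n) * (α * n * entryMax S) ^ a)) := by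
      simp [Finset.sum_const, nsmul_eq_mul]
    have h5 : (T.card : ℝ) * (entryMax S * (Real.sqrt (μ * r / n) * (α * n * entryMax S) ^ a))
        ≤ (α * n) * (entryMax S * (Real.sqrt (μ * r / n) * (α * n * entryMax S) ^ a)) := by
      refine mul_le_mul_of_nonneg_right (hcol i) ?_
      positivity
    calc ‖∑ j, S j i • u j‖ ≤ _ := h1
      _ = _ := h2
      _ ≤ _ := h3
      _ = _ := h4
      _ ≤ _ := h5
      _ = Real.sqrt (μ * r / n) * (α * n * entryMax S) ^ (a+1) := by ring
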